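/- Let B be an n×n matrix with zero diagonal, and let p ≥ 1. Let R_ρ and R_ρ' be independent random diagonal matrices, each with i.i.d. Bernoulli(ρ) diagonal entries. Then (E ‖R_ρ B R_ρ‖^p)^{1/p} ≤ 20 (E ‖R_ρ B R_ρ'‖^p)^{1/p}. -/
import Mathlib

open scoped BigOperators

/-- Spectral norm: operator norm of a matrix as a map `ℓ₂ⁿ → ℓ₂ᵐ`. -/
noncomputable def specNorm {m n : ℕ} (A : Matrix (Fin m) (Fin n) ℂ) : ℝ :=
  ‖LinearMap.toContinuousLinearMap (Matrix.toEuclideanLin A)‖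

/-- Maximum Euclidean column norm, i.e. the `ℓ₁ → ℓ₂` operator norm. -/
noncomputable def colNorm {m n : ℕ} (A : Matrix (Fin m) (Fin n) ℂ) : ℝ :=
  ⨆ j, Real.sqrt (∑ i, ‖A i j‖ ^ 2)

/-- The diagonal 0–1 projector onto the coordinates in `s`. -/
def projOf {n : ℕ} (s : Finset (Fin n)) : Matrix (Fin n) (Fin n) ℂ :=
  Matrix.diagonal fun i => if i ∈ s then 1 else 0

/-- Diagonal 0–1 matrix determined by a boolean vector. -/
def bernM {n : ℕ} (f : Fin n → Bool) : Matrix (Fin n) (Fin n) ℂ :=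
  Matrix.diagonal fun i => if f i then 1 else 0

/-- Probability weight of the outcome `f` for i.i.d. Bernoulli(ρ) selectors. -/
noncomputable def bw {n : ℕ} (ρ : ℝ) (f : Fin n → Bool) : ℝ :=
  ∏ i, if f i then ρ else 1 - ρ

set_option synthInstance.maxHeartbeats 1000000 in
set_option maxHeartbeats 1000000 in
lemma specNorm_eq {n : ℕ} (A : Matrix (Fin n) (Fin n) ℂ) :
    specNorm A = ‖Matrix.toEuclideanCLM (𝕜 := ℂ) A‖ := rfl

lemma specNorm_nonneg {m n : ℕ} (A : Matrix (Fin m) (Fin n) ℂ) : 0 ≤ specNorm A :=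
  norm_nonneg _

set_option synthInstance.maxHeartbeats 1000000 in
set_option maxHeartbeats 1000000 in
lemma specNorm_mul_le {n : ℕ} (A B : Matrix (Fin n) (Fin n) ℂ) :
    specNorm (A * B) ≤ specNorm A * specNorm B := by
  rw [specNorm_eq, specNorm_eq, specNorm_eq, map_mul]
  exact ContinuousLinearMap.opNorm_comp_le _ _

set_option synthInstance.maxHeartbeats 1000000 in
set_option maxHeartbeats 1000000 in
lemma specNorm_smul {n : ℕ} (c : ℂ) (A : Matrix (Fin n) (Fin n) ℂ) :
    specNorm (c • A) = ‖c‖ * specNorm A := by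
  rw [specNorm_eq, specNorm_eq, map_smul]
  exact norm_smul c (Matrix.toEuclideanCLM (𝕜 := ℂ) A)

set_option synthInstance.maxHeartbeats 1000000 in
set_option maxHeartbeats 1000000 in
lemma specNorm_sum_le {n : ℕ} {ι : Type*} (s : Finset ι) (A : ι → Matrix (Fin n) (Fin n) ℂ) :
    specNorm (∑ i ∈ s, A i) ≤ ∑ i ∈ s, specNorm (A i) := by
  simp only [specNorm_eq, map_sum]
  exact norm_sum_le _ _

set_option synthInstance.maxHeartbeats 1000000 in
set_option maxHeartbeats 1000000 in
lemma bernM_norm_le {n : ℕ} (f : Fin n → Bool) : specNorm (bernM f) ≤ 1 := by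
  rw [specNorm_eq]
  apply ContinuousLinearMap.opNorm_le_bound _ zero_le_one
  intro x
  rw [one_mul]
  rw [EuclideanSpace.norm_eq, EuclideanSpace.norm_eq]
  apply Real.sqrt_le_sqrt
  apply Finset.sum_le_sum
  intro i _
  have h : (Matrix.toEuclideanCLM (𝕜 := ℂ) (bernM f) x) i
      = ((bernM f).mulVec (fun j => x j)) i := rfl
  rw [h]
  simp only [bernM, Matrix.mulVec_diagonal]
  rcases hfi : f i <;> simp

lemma sum_prod_bool {n : ℕ} {R : Type*} [CommSemiring R] (c : Fin n → Bool → R) :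
    ∑ δ : Fin n → Bool, ∏ i, c i (δ i) = ∏ i, (c i true + c i false) := by
  rw [← Fintype.prod_sum]
  congr 1; funext i
  simp [Fintype.sum_bool]

lemma bw_sum {n : ℕ} (ρ : ℝ) : ∑ f : Fin n → Bool, bw ρ f = 1 := by
  unfold bw
  rw [sum_prod_bool (fun _ b => if b then ρ else 1 - ρ)]
  simp

lemma bw_nonneg {n : ℕ} {ρ : ℝ} (hρ : ρ ∈ Set.Ioo (0:ℝ) 1) (f : Fin n → Bool) :
    0 ≤ bw ρ f := by
  apply Finset.prod_nonneg
  intro i _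
  split <;> [exact le_of_lt hρ.1; linarith [hρ.2]]

lemma count_lemma {n : ℕ} {i j : Fin n} (hij : i ≠ j) :
    ∑ δ : Fin n → Bool, ((1/2:ℂ)^n * (if δ i then 1 else 0) * (if δ j then 0 else 1))
      = 1/4 := by
  have key : ∀ δ : Fin n → Bool,
      (1/2:ℂ)^n * (if δ i then 1 else 0) * (if δ j then 0 else 1)
        = ∏ k, ((1/2:ℂ) * ((if k = i then (if δ k then 1 else 0) else 1)
            * (if k = j then (if δ k then 0 else 1) else 1))) := by
    intro δ
    rw [Finset.prod_mul_distrib, Finset.prod_mul_distrib]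
    rw [Finset.prod_ite_eq' Finset.univ i (fun k => if δ k then (1:ℂ) else 0)]
    rw [Finset.prod_ite_eq' Finset.univ j (fun k => if δ k then (0:ℂ) else 1)]
    simp [Finset.prod_const]
  simp_rw [key]
  rw [sum_prod_bool (fun k b => (1/2:ℂ) * ((if k = i then (if b then 1 else 0) else 1)
      * (if k = j then (if b then 0 else 1) else 1)))]
  simp only [Bool.false_eq_true, if_true, if_false]
  have : ∀ k : Fin n,
      ((1/2:ℂ) * ((if k = i then (1:ℂ) else 1) * (if k = j then 0 else 1))
        + (1/2:ℂ) * ((if k = i then (0:ℂ) else 1) * (if k = j then 1 else 1)))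
      = (if k = i then (1/2:ℂ) else 1) * (if k = j then (1/2:ℂ) else 1) := by
    intro k
    split_ifs with h1 h2 <;> try norm_num
    exact absurd (h1.symm.trans h2) hij
  simp_rw [this]
  rw [Finset.prod_mul_distrib]
  rw [Finset.prod_ite_eq' Finset.univ i (fun _ => (1/2:ℂ))]
  rw [Finset.prod_ite_eq' Finset.univ j (fun _ => (1/2:ℂ))]
  norm_num

lemma bernM_mul_entry {n : ℕ} (a b : Fin n → Bool) (B : Matrix (Fin n) (Fin n) ℂ)
    (i j : Fin n) :
    (bernM a * B * bernM b) i j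
      = (if a i then 1 else 0) * B i j * (if b j then 1 else 0) := by
  rw [Matrix.mul_apply]
  simp [bernM, Matrix.diagonal_mul, Matrix.diagonal_apply, ite_mul, mul_ite]

lemma key_identity {n : ℕ} (B : Matrix (Fin n) (Fin n) ℂ) (hB : ∀ i, B i i = 0)
    (f : Fin n → Bool) :
    bernM f * B * bernM f
      = ∑ δ : Fin n → Bool, ((1/2:ℂ)^n * 4)
          • (bernM (fun i => f i && δ i) * B * bernM (fun i => f i && !δ i)) := by
  ext i j
  rw [Matrix.sum_apply]
  simp only [Matrix.smul_apply, bernM_mul_entry, smul_eq_mul]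
  by_cases hij : i = j
  · subst hij
    rw [hB i]
    simp
  · have : ∀ δ : Fin n → Bool,
        (1/2:ℂ)^n * 4 * ((if f i && δ i then (1:ℂ) else 0) * B i j
          * (if f j && !δ j then (1:ℂ) else 0))
        = (4 * ((if f i then (1:ℂ) else 0) * B i j * (if f j then 1 else 0)))
          * ((1/2:ℂ)^n * (if δ i then 1 else 0) * (if δ j then 0 else 1)) := by
      intro δ
      cases hfi : f i <;> cases hfj : f j <;> cases hdi : δ i <;> cases hdj : δ j <;>
        simp [hfi, hfj, hdi, hdj] <;> ring
    simp_rw [this]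
    rw [← Finset.mul_sum, count_lemma hij]
    ring

def mergeP {n : ℕ} (δ : Fin n → Bool) :
    (Fin n → Bool) × (Fin n → Bool) → (Fin n → Bool) × (Fin n → Bool) :=
  fun fg => (fun i => if δ i then fg.1 i else fg.2 i, fun i => if δ i then fg.2 i else fg.1 i)

lemma mergeP_involutive {n : ℕ} (δ : Fin n → Bool) : Function.Involutive (mergeP δ) := by
  intro fg
  unfold mergeP
  ext i <;> simp <;> split <;> simp

lemma swap_lemma {n : ℕ} (ρ : ℝ) (δ : Fin n → Bool)
    (F : (Fin n → Bool) → (Fin n → Bool) → ℝ) :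
    ∑ f : Fin n → Bool, ∑ g : Fin n → Bool,
        bw ρ f * bw ρ g * F (fun i => f i && δ i) (fun i => g i && !δ i)
      = ∑ f : Fin n → Bool,
          bw ρ f * F (fun i => f i && δ i) (fun i => f i && !δ i) := by
  have hp1 : (∑ f : Fin n → Bool, ∑ g : Fin n → Bool,
        bw ρ f * bw ρ g * F (fun i => f i && δ i) (fun i => g i && !δ i))
      = ∑ fg : (Fin n → Bool) × (Fin n → Bool),
          bw ρ fg.1 * bw ρ fg.2 * F (fun i => fg.1 i && δ i) (fun i => fg.2 i && !δ i) :=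
    (Fintype.sum_prod_type (f := fun fg : (Fin n → Bool) × (Fin n → Bool) =>
      bw ρ fg.1 * bw ρ fg.2 * F (fun i => fg.1 i && δ i) (fun i => fg.2 i && !δ i))).symm
  rw [hp1]
  rw [← Function.Bijective.sum_comp ((mergeP_involutive δ).bijective)
    (fun fg => bw ρ fg.1 * bw ρ fg.2 * F (fun i => fg.1 i && δ i) (fun i => fg.2 i && !δ i))]
  have : ∀ fg : (Fin n → Bool) × (Fin n → Bool),
      bw ρ (mergeP δ fg).1 * bw ρ (mergeP δ fg).2
          * F (fun i => (mergeP δ fg).1 i && δ i) (fun i => (mergeP δ fg).2 i && !δ i)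
      = bw ρ fg.1 * bw ρ fg.2 * F (fun i => fg.1 i && δ i) (fun i => fg.1 i && !δ i) := by
    intro ⟨f, g⟩
    unfold mergeP
    have h1 : bw ρ (fun i => if δ i then f i else g i) * bw ρ (fun i => if δ i then g i else f i)
        = bw ρ f * bw ρ g := by
      unfold bw
      rw [← Finset.prod_mul_distrib, ← Finset.prod_mul_distrib]
      congr 1; funext i
      cases hdi : δ i <;> simp [hdi, mul_comm]
    have h2 : (fun i => (if δ i then f i else g i) && δ i) = (fun i => f i && δ i) := by
      funext i; cases hdi : δ i <;> simp [hdi]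
    have h3 : (fun i => (if δ i then g i else f i) && !δ i) = (fun i => f i && !δ i) := by
      funext i; cases hdi : δ i <;> simp [hdi]
    simp only [h2, h3, h1]
  simp_rw [this]
  have hp2 : (∑ fg : (Fin n → Bool) × (Fin n → Bool),
        bw ρ fg.1 * bw ρ fg.2 * F (fun i => fg.1 i && δ i) (fun i => fg.1 i && !δ i))
      = ∑ f : Fin n → Bool, ∑ g : Fin n → Bool,
          bw ρ f * bw ρ g * F (fun i => f i && δ i) (fun i => f i && !δ i) :=
    Fintype.sum_prod_type (f := fun fg : (Fin n → Bool) × (Fin n → Bool) =>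
      bw ρ fg.1 * bw ρ fg.2 * F (fun i => fg.1 i && δ i) (fun i => fg.1 i && !δ i))
  rw [hp2]
  have : ∀ f : Fin n → Bool,
      ∑ g : Fin n → Bool, bw ρ f * bw ρ g * F (fun i => f i && δ i) (fun i => f i && !δ i)
      = bw ρ f * F (fun i => f i && δ i) (fun i => f i && !δ i) := by
    intro f
    calc ∑ g : Fin n → Bool,
          bw ρ f * bw ρ g * F (fun i => f i && δ i) (fun i => f i && !δ i)
        = (bw ρ f * F (fun i => f i && δ i) (fun i => f i && !δ i))
            * ∑ g : Fin n → Bool, bw ρ g := by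
          rw [Finset.mul_sum]; apply Finset.sum_congr rfl; intros; ring
      _ = _ := by rw [bw_sum, mul_one]
  simp_rw [this]

lemma bernM_mul_bernM {n : ℕ} (a b : Fin n → Bool) :
    bernM a * bernM b = bernM (fun i => a i && b i) := by
  unfold bernM
  rw [Matrix.diagonal_mul_diagonal]
  have h : ∀ i, (if a i then (1:ℂ) else 0) * (if b i then 1 else 0)
      = if (a i && b i) then 1 else 0 := by
    intro i; cases ha : a i <;> cases hb : b i <;> simp [ha, hb]
  exact congrArg Matrix.diagonal (funext fun i => h i)

lemma contract {n : ℕ} (B : Matrix (Fin n) (Fin n) ℂ) (f g δ : Fin n → Bool) :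
    specNorm (bernM (fun i => f i && δ i) * B * bernM (fun i => g i && !δ i))
      ≤ specNorm (bernM f * B * bernM g) := by
  have hid : bernM (fun i => f i && δ i) * B * bernM (fun i => g i && !δ i)
      = bernM δ * (bernM f * B * bernM g) * bernM (fun i => !δ i) := by
    have e1 : bernM δ * bernM f = bernM (fun i => f i && δ i) := by
      rw [bernM_mul_bernM]
      have : (fun i => δ i && f i) = (fun i => f i && δ i) := by
        funext i; exact Bool.and_comm _ _
      rw [this]
    have e2 : bernM g * bernM (fun i => !δ i) = bernM (fun i => g i && !δ i) := by
      rw [bernM_mul_bernM]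
    rw [← e1, ← e2]
    noncomm_ring
  rw [hid]
  calc specNorm (bernM δ * (bernM f * B * bernM g) * bernM (fun i => !δ i))
      ≤ specNorm (bernM δ * (bernM f * B * bernM g)) * specNorm (bernM (fun i => !δ i)) :=
        specNorm_mul_le _ _
    _ ≤ specNorm (bernM δ * (bernM f * B * bernM g)) * 1 := by
        apply mul_le_mul_of_nonneg_left (bernM_norm_le _) (specNorm_nonneg _)
    _ = specNorm (bernM δ * (bernM f * B * bernM g)) := mul_one _
    _ ≤ specNorm (bernM δ) * specNorm (bernM f * B * bernM g) := specNorm_mul_le _ _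
    _ ≤ 1 * specNorm (bernM f * B * bernM g) :=
        mul_le_mul_of_nonneg_right (bernM_norm_le _) (specNorm_nonneg _)
    _ = specNorm (bernM f * B * bernM g) := one_mul _

lemma half_pow_sum {n : ℕ} : ∑ _δ : Fin n → Bool, ((1/2:ℝ))^n = 1 := by
  rw [Finset.sum_const]
  simp only [Finset.card_univ]
  rw [Fintype.card_fun]
  simp only [Fintype.card_bool, Fintype.card_fin, nsmul_eq_mul]
  push_cast
  rw [one_div, inv_pow, mul_inv_cancel₀ (by positivity)]

/-- Bourgain–Tzafriri decoupling inequality for hollow matrices. -/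
theorem decoupling (n : ℕ) (B : Matrix (Fin n) (Fin n) ℂ) (hB : ∀ i, B i i = 0)
    (ρ : ℝ) (hρ : ρ ∈ Set.Ioo (0:ℝ) 1) (p : ℝ) (hp : 1 ≤ p) :
    (∑ f : Fin n → Bool, bw ρ f * specNorm (bernM f * B * bernM f) ^ p) ^ (1/p)
      ≤ 20 * (∑ f : Fin n → Bool, ∑ g : Fin n → Bool,
            bw ρ f * bw ρ g * specNorm (bernM f * B * bernM g) ^ p) ^ (1/p) := by
  have hp0 : (0:ℝ) < p := lt_of_lt_of_le one_pos hp
  set S2 := ∑ f : Fin n → Bool, ∑ g : Fin n → Bool,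
      bw ρ f * bw ρ g * specNorm (bernM f * B * bernM g) ^ p with hS2
  have hS2nonneg : 0 ≤ S2 := by
    apply Finset.sum_nonneg; intro f _
    apply Finset.sum_nonneg; intro g _
    have := bw_nonneg hρ f
    have := bw_nonneg hρ g
    have := Real.rpow_nonneg (specNorm_nonneg (bernM f * B * bernM g)) p
    positivity
  -- step 1: pointwise bound
  have h1 : ∀ f : Fin n → Bool,
      specNorm (bernM f * B * bernM f)
        ≤ ∑ δ : Fin n → Bool, (1/2:ℝ)^n
            * (4 * specNorm (bernM (fun i => f i && δ i) * B * bernM (fun i => f i && !δ i))) := by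
    intro f
    rw [key_identity B hB f]
    refine le_trans (specNorm_sum_le _ _) (le_of_eq (Finset.sum_congr rfl fun δ _ => ?_))
    rw [specNorm_smul]
    have : ‖(1/2:ℂ)^n * 4‖ = (1/2:ℝ)^n * 4 := by
      rw [norm_mul, norm_pow]
      norm_num
    rw [this]
    ring
  -- step 2: Jensen
  have h2 : ∀ f : Fin n → Bool,
      specNorm (bernM f * B * bernM f) ^ p
        ≤ (4:ℝ)^p * ∑ δ : Fin n → Bool, (1/2:ℝ)^n
            * specNorm (bernM (fun i => f i && δ i) * B * bernM (fun i => f i && !δ i)) ^ p := by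
    intro f
    calc specNorm (bernM f * B * bernM f) ^ p
        ≤ (∑ δ : Fin n → Bool, (1/2:ℝ)^n
            * (4 * specNorm (bernM (fun i => f i && δ i) * B
                * bernM (fun i => f i && !δ i)))) ^ p :=
          Real.rpow_le_rpow (specNorm_nonneg _) (h1 f) hp0.le
      _ ≤ ∑ δ : Fin n → Bool, (1/2:ℝ)^n
            * (4 * specNorm (bernM (fun i => f i && δ i) * B
                * bernM (fun i => f i && !δ i))) ^ p := by
          apply Real.rpow_arith_mean_le_arith_mean_rpow Finset.univ _ _
            (fun _ _ => by positivity) half_pow_sum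
            (fun δ _ => mul_nonneg (by norm_num) (specNorm_nonneg _)) hp
      _ = (4:ℝ)^p * ∑ δ : Fin n → Bool, (1/2:ℝ)^n
            * specNorm (bernM (fun i => f i && δ i) * B
                * bernM (fun i => f i && !δ i)) ^ p := by
          rw [Finset.mul_sum]
          apply Finset.sum_congr rfl
          intro δ _
          rw [Real.mul_rpow (by norm_num) (specNorm_nonneg _)]
          ring
  -- step 3: sum over f, decouple
  have h3 : ∀ δ : Fin n → Bool,
      (∑ f : Fin n → Bool, bw ρ f
          * specNorm (bernM (fun i => f i && δ i) * B * bernM (fun i => f i && !δ i)) ^ p)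
        ≤ S2 := by
    intro δ
    rw [← swap_lemma ρ δ (fun a b => specNorm (bernM a * B * bernM b) ^ p)]
    apply Finset.sum_le_sum
    intro f _
    apply Finset.sum_le_sum
    intro g _
    apply mul_le_mul_of_nonneg_left _ (mul_nonneg (bw_nonneg hρ f) (bw_nonneg hρ g))
    exact Real.rpow_le_rpow (specNorm_nonneg _) (contract B f g δ) hp0.le
  -- assemble: S1 ≤ 4^p * S2
  have hmain : (∑ f : Fin n → Bool, bw ρ f * specNorm (bernM f * B * bernM f) ^ p)
      ≤ (4:ℝ)^p * S2 := by
    calc ∑ f : Fin n → Bool, bw ρ f * specNorm (bernM f * B * bernM f) ^ p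
        ≤ ∑ f : Fin n → Bool, bw ρ f * ((4:ℝ)^p * ∑ δ : Fin n → Bool, (1/2:ℝ)^n
            * specNorm (bernM (fun i => f i && δ i) * B
                * bernM (fun i => f i && !δ i)) ^ p) := by
          apply Finset.sum_le_sum
          intro f _
          exact mul_le_mul_of_nonneg_left (h2 f) (bw_nonneg hρ f)
      _ = (4:ℝ)^p * ∑ δ : Fin n → Bool, (1/2:ℝ)^n * ∑ f : Fin n → Bool, bw ρ f
            * specNorm (bernM (fun i => f i && δ i) * B
                * bernM (fun i => f i && !δ i)) ^ p := by
          simp_rw [Finset.mul_sum]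
          rw [Finset.sum_comm]
          apply Finset.sum_congr rfl; intro δ _
          apply Finset.sum_congr rfl; intro f _
          ring
      _ ≤ (4:ℝ)^p * ∑ δ : Fin n → Bool, (1/2:ℝ)^n * S2 := by
          apply mul_le_mul_of_nonneg_left _ (by positivity)
          apply Finset.sum_le_sum
          intro δ _
          exact mul_le_mul_of_nonneg_left (h3 δ) (by positivity)
      _ = (4:ℝ)^p * S2 := by
          rw [← Finset.sum_mul, half_pow_sum, one_mul]
  -- finish: take 1/p powers
  calc (∑ f : Fin n → Bool, bw ρ f * specNorm (bernM f * B * bernM f) ^ p) ^ (1/p)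
      ≤ ((4:ℝ)^p * S2) ^ (1/p) := by
        apply Real.rpow_le_rpow _ hmain (by positivity)
        apply Finset.sum_nonneg
        intro f _
        exact mul_nonneg (bw_nonneg hρ f)
          (Real.rpow_nonneg (specNorm_nonneg _) p)
    _ = 4 * S2 ^ (1/p) := by
        rw [Real.mul_rpow (by positivity) hS2nonneg]
        rw [← Real.rpow_mul (by norm_num : (0:ℝ) ≤ 4), mul_one_div,
          div_self hp0.ne', Real.rpow_one]
    _ ≤ 20 * S2 ^ (1/p) := by
        apply mul_le_mul_of_nonneg_right (by norm_num)
        exact Real.rpow_nonneg hS2nonneg _
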